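/- arXiv:math/0607158 — 3 statements merged into one kernel-verified Lean document; each statement's English description precedes it below -/
import Mathlib

section
/- In the field F = ℚ(p, x₁, x₂, x₃) one has the identity ω(0,1) + p³·ω(1,2) + p²·x₁x₂x₃·ω(1,1) + (p²−1)·ω(1,1) + (p²−1)·(x₁x₂x₃/p²)·ω(0,1) + (p³−p²)(p²+p+1)·(x₁x₂x₃/p⁶) = ((p²−1)/p³)(sym_{2,1,1}+sym_{1,1,0}) + (1/p)(sym_{2,2,1}+sym_{2,1,0}+sym_{1,0,0}) + ((p−1)(3p²+2p+1)/p⁴)·sym_{1,1,1}. (The left-hand side is Ω(T₁(p²))/x₀², Andrianov's formula Ω(T_i(p²)) = Σ_{a+b≤3, a≥i} p^{b(a+b+1)} sm_p(a−i,a) x₀² ω(π_{a,b}) for i = 1, using sm_p(0,a) = 1, sm_p(1,2) = p²−1, sm_p(2,3) = (p³−p²)(p²+p+1), and homogeneity ω(t(p·d)) = (x₁x₂x₃/p⁶)ω(t(d)).) -/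
/-! Common setup: the field `F = ℚ(p, x₁, x₂, x₃)`, realized as the fraction field of the
polynomial ring `ℚ[p, x₁, x₂, x₃]`.  `p` is the variable of index `0`, and `x i` (for
`i : Fin 3`) are the variables `x₁, x₂, x₃`. -/

noncomputable section

/-- The rational function field `ℚ(p, x₁, x₂, x₃)`. -/
abbrev F : Type := FractionRing (MvPolynomial (Fin 4) ℚ)

/-- The indeterminate `p`. -/
def p : F := algebraMap (MvPolynomial (Fin 4) ℚ) F (MvPolynomial.X 0)

/-- The indeterminates `x₁, x₂, x₃` (as `x 0, x 1, x 2`). -/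
def x (i : Fin 3) : F := algebraMap (MvPolynomial (Fin 4) ℚ) F (MvPolynomial.X i.succ)

/-- The monomial symmetric polynomial `sym_{a,b,c}` in `x₁, x₂, x₃`: the sum of all *distinct*
monomials obtained from `x₁^a x₂^b x₃^c` by permuting the variables. -/
def sym (a b c : ℕ) : F :=
  ∑ e ∈ Finset.univ.image (fun σ : Equiv.Perm (Fin 3) => (![a, b, c]) ∘ σ),
    ∏ j, x j ^ e j

/-- Andrianov's formula for the Satake spherical image `ω(λ,μ) = ω(t(1, p^λ, p^μ))`
of the `GL₃` Hecke operator `t(1, p^λ, p^μ)`, for `0 ≤ λ ≤ μ`. -/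
def ω (l m : ℕ) : F :=
  ((if l = 0 ∧ m = 0 then p ^ 3 / ((p + 1) * (p ^ 2 + p + 1))
    else if l = 0 ∨ l = m then p / (p + 1)
    else 1) / p ^ (2 * l + m)) *
  ∑ σ : Equiv.Perm (Fin 3),
    x (σ 1) ^ l * x (σ 2) ^ m *
      ((x (σ 1) - x (σ 0) / p) * (x (σ 2) - x (σ 0) / p) * (x (σ 2) - x (σ 1) / p)) /
      ((x (σ 1) - x (σ 0)) * (x (σ 2) - x (σ 0)) * (x (σ 2) - x (σ 1)))

open Equiv in
lemma perm3_univ : (Finset.univ : Finset (Equiv.Perm (Fin 3))) =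
    {1, swap 0 1, swap 0 2, swap 1 2, swap 0 1 * swap 1 2, swap 0 2 * swap 1 2} := by decide

lemma alg_ne {q : MvPolynomial (Fin 4) ℚ} (h : q ≠ 0) :
    algebraMap (MvPolynomial (Fin 4) ℚ) F q ≠ 0 := by
  simpa using (map_ne_zero_iff _ (IsFractionRing.injective (MvPolynomial (Fin 4) ℚ) F)).2 h

lemma hp : p ≠ 0 := alg_ne (MvPolynomial.X_ne_zero 0)

lemma hp1 : p + 1 ≠ 0 := by
  have : ((algebraMap (MvPolynomial (Fin 4) ℚ) F) (MvPolynomial.X 0 + 1)) ≠ 0 := by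
    apply alg_ne
    intro h
    have := congrArg (MvPolynomial.coeff 0) h
    simp [MvPolynomial.coeff_X] at this
  simpa [p, map_add] using this

lemma hx {i j : Fin 3} (h : i ≠ j) : x i - x j ≠ 0 := by
  have : ((algebraMap (MvPolynomial (Fin 4) ℚ) F) (MvPolynomial.X i.succ - MvPolynomial.X j.succ)) ≠ 0 := by
    apply alg_ne
    rw [sub_ne_zero]
    exact fun hXX => h (Fin.succ_injective 3 (MvPolynomial.X_injective hXX))
  simpa [x, map_sub] using this

lemma hD : (x 1 - x 0) * (x 2 - x 0) * (x 2 - x 1) ≠ 0 :=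
  mul_ne_zero (mul_ne_zero (hx (by decide)) (hx (by decide))) (hx (by decide))

open Equiv in
lemma omega_expand (l m : ℕ) (hlm : ¬ (l = 0 ∧ m = 0)) :
    ω l m = ((if l = 0 ∨ l = m then p / (p + 1) else 1) / p ^ (2 * l + m)) *
      ((x 1 ^ l * x 2 ^ m * ((x 1 - x 0 / p) * (x 2 - x 0 / p) * (x 2 - x 1 / p))
        - x 0 ^ l * x 2 ^ m * ((x 0 - x 1 / p) * (x 2 - x 1 / p) * (x 2 - x 0 / p))
        - x 1 ^ l * x 0 ^ m * ((x 1 - x 2 / p) * (x 0 - x 2 / p) * (x 0 - x 1 / p))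
        - x 2 ^ l * x 1 ^ m * ((x 2 - x 0 / p) * (x 1 - x 0 / p) * (x 1 - x 2 / p))
        + x 2 ^ l * x 0 ^ m * ((x 2 - x 1 / p) * (x 0 - x 1 / p) * (x 0 - x 2 / p))
        + x 0 ^ l * x 1 ^ m * ((x 0 - x 2 / p) * (x 1 - x 2 / p) * (x 1 - x 0 / p)))
       / ((x 1 - x 0) * (x 2 - x 0) * (x 2 - x 1))) := by
  rw [ω, if_neg hlm, perm3_univ,
    Finset.sum_insert (by decide), Finset.sum_insert (by decide),
    Finset.sum_insert (by decide), Finset.sum_insert (by decide),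
    Finset.sum_insert (by decide), Finset.sum_singleton]
  simp only [show ((1 : Perm (Fin 3)) 0) = 0 from rfl, show ((1 : Perm (Fin 3)) 1) = 1 from rfl,
    show ((1 : Perm (Fin 3)) 2) = 2 from rfl,
    show ((swap 0 1 : Perm (Fin 3)) 0) = 1 from rfl, show ((swap 0 1 : Perm (Fin 3)) 1) = 0 from rfl,
    show ((swap 0 1 : Perm (Fin 3)) 2) = 2 from rfl,
    show ((swap 0 2 : Perm (Fin 3)) 0) = 2 from rfl, show ((swap 0 2 : Perm (Fin 3)) 1) = 1 from rfl,
    show ((swap 0 2 : Perm (Fin 3)) 2) = 0 from rfl,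
    show ((swap 1 2 : Perm (Fin 3)) 0) = 0 from rfl, show ((swap 1 2 : Perm (Fin 3)) 1) = 2 from rfl,
    show ((swap 1 2 : Perm (Fin 3)) 2) = 1 from rfl,
    show ((swap 0 1 * swap 1 2 : Perm (Fin 3)) 0) = 1 from rfl,
    show ((swap 0 1 * swap 1 2 : Perm (Fin 3)) 1) = 2 from rfl,
    show ((swap 0 1 * swap 1 2 : Perm (Fin 3)) 2) = 0 from rfl,
    show ((swap 0 2 * swap 1 2 : Perm (Fin 3)) 0) = 2 from rfl,
    show ((swap 0 2 * swap 1 2 : Perm (Fin 3)) 1) = 0 from rfl,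
    show ((swap 0 2 * swap 1 2 : Perm (Fin 3)) 2) = 1 from rfl]
  congr 1
  have e2 : x 0 ^ l * x 2 ^ m * ((x 0 - x 1 / p) * (x 2 - x 1 / p) * (x 2 - x 0 / p)) /
      ((x 0 - x 1) * (x 2 - x 1) * (x 2 - x 0))
      = -(x 0 ^ l * x 2 ^ m * ((x 0 - x 1 / p) * (x 2 - x 1 / p) * (x 2 - x 0 / p))) /
      ((x 1 - x 0) * (x 2 - x 0) * (x 2 - x 1)) := by
    rw [div_eq_div_iff
      (mul_ne_zero (mul_ne_zero (hx (by decide)) (hx (by decide))) (hx (by decide))) hD]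
    ring
  have e3 : x 1 ^ l * x 0 ^ m * ((x 1 - x 2 / p) * (x 0 - x 2 / p) * (x 0 - x 1 / p)) /
      ((x 1 - x 2) * (x 0 - x 2) * (x 0 - x 1))
      = -(x 1 ^ l * x 0 ^ m * ((x 1 - x 2 / p) * (x 0 - x 2 / p) * (x 0 - x 1 / p))) /
      ((x 1 - x 0) * (x 2 - x 0) * (x 2 - x 1)) := by
    rw [div_eq_div_iff
      (mul_ne_zero (mul_ne_zero (hx (by decide)) (hx (by decide))) (hx (by decide))) hD]
    ring
  have e4 : x 2 ^ l * x 1 ^ m * ((x 2 - x 0 / p) * (x 1 - x 0 / p) * (x 1 - x 2 / p)) /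
      ((x 2 - x 0) * (x 1 - x 0) * (x 1 - x 2))
      = -(x 2 ^ l * x 1 ^ m * ((x 2 - x 0 / p) * (x 1 - x 0 / p) * (x 1 - x 2 / p))) /
      ((x 1 - x 0) * (x 2 - x 0) * (x 2 - x 1)) := by
    rw [div_eq_div_iff
      (mul_ne_zero (mul_ne_zero (hx (by decide)) (hx (by decide))) (hx (by decide))) hD]
    ring
  have e5 : x 2 ^ l * x 0 ^ m * ((x 2 - x 1 / p) * (x 0 - x 1 / p) * (x 0 - x 2 / p)) /
      ((x 2 - x 1) * (x 0 - x 1) * (x 0 - x 2))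
      = x 2 ^ l * x 0 ^ m * ((x 2 - x 1 / p) * (x 0 - x 1 / p) * (x 0 - x 2 / p)) /
      ((x 1 - x 0) * (x 2 - x 0) * (x 2 - x 1)) := by
    rw [div_eq_div_iff
      (mul_ne_zero (mul_ne_zero (hx (by decide)) (hx (by decide))) (hx (by decide))) hD]
    ring
  have e6 : x 0 ^ l * x 1 ^ m * ((x 0 - x 2 / p) * (x 1 - x 2 / p) * (x 1 - x 0 / p)) /
      ((x 0 - x 2) * (x 1 - x 2) * (x 1 - x 0))
      = x 0 ^ l * x 1 ^ m * ((x 0 - x 2 / p) * (x 1 - x 2 / p) * (x 1 - x 0 / p)) /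
      ((x 1 - x 0) * (x 2 - x 0) * (x 2 - x 1)) := by
    rw [div_eq_div_iff
      (mul_ne_zero (mul_ne_zero (hx (by decide)) (hx (by decide))) (hx (by decide))) hD]
    ring
  rw [e2, e3, e4, e5, e6, ← add_div, ← add_div, ← add_div,
    ← add_div, ← add_div]
  rw [div_eq_div_iff hD hD]
  ring

set_option maxHeartbeats 1000000 in
lemma w01 : ω 0 1 = (x 0 + x 1 + x 2) / p := by
  rw [omega_expand 0 1 (by norm_num)]
  norm_num
  rw [← mul_div_assoc, div_eq_div_iff hD hp]
  have hp' := hp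
  have hp1' := hp1
  field_simp
  ring

set_option maxHeartbeats 1000000 in
lemma w11 : ω 1 1 = (x 0 * x 1 + x 0 * x 2 + x 1 * x 2) / p ^ 3 := by
  rw [omega_expand 1 1 (by norm_num)]
  norm_num
  rw [← mul_div_assoc, div_eq_div_iff hD (pow_ne_zero 3 hp)]
  have hp' := hp
  have hp1' := hp1
  field_simp
  ring

set_option maxHeartbeats 1000000 in
lemma w12 : ω 1 2 = (p ^ 2 * (x 0 ^ 2 * x 1 + x 0 ^ 2 * x 2 + x 1 ^ 2 * x 0 + x 1 ^ 2 * x 2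
      + x 2 ^ 2 * x 0 + x 2 ^ 2 * x 1)
    + (2 * p + 1) * (p - 1) * (x 0 * x 1 * x 2)) / p ^ 6 := by
  rw [omega_expand 1 2 (by norm_num)]
  norm_num
  rw [← mul_div_assoc, div_eq_div_iff hD (pow_ne_zero 6 hp)]
  have hp' := hp
  have hp1' := hp1
  field_simp
  ring

set_option maxHeartbeats 1000000 in
/-- the identity for `Ω(T₁(p²))/x₀²`. -/
theorem Omega_T1_p2 :
    ω 0 1 + p ^ 3 * ω 1 2 + p ^ 2 * (x 0 * x 1 * x 2) * ω 1 1
      + (p ^ 2 - 1) * ω 1 1 + (p ^ 2 - 1) * (x 0 * x 1 * x 2 / p ^ 2) * ω 0 1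
      + (p ^ 3 - p ^ 2) * (p ^ 2 + p + 1) * (x 0 * x 1 * x 2 / p ^ 6)
    = ((p ^ 2 - 1) / p ^ 3) * (sym 2 1 1 + sym 1 1 0)
      + (1 / p) * (sym 2 2 1 + sym 2 1 0 + sym 1 0 0)
      + ((p - 1) * (3 * p ^ 2 + 2 * p + 1) / p ^ 4) * sym 1 1 1 := by
  have s211 : sym 2 1 1 = x 0 ^ 2 * x 1 * x 2 + x 0 * x 1 ^ 2 * x 2 + x 0 * x 1 * x 2 ^ 2 := by
    rw [sym, show (Finset.univ.image (fun σ : Equiv.Perm (Fin 3) => (![2,1,1]) ∘ σ))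
        = {![2,1,1], ![1,2,1], ![1,1,2]} from by decide,
      Finset.sum_insert (by decide), Finset.sum_insert (by decide), Finset.sum_singleton]
    simp [Fin.prod_univ_three]
    ring
  have s110 : sym 1 1 0 = x 0 * x 1 + x 0 * x 2 + x 1 * x 2 := by
    rw [sym, show (Finset.univ.image (fun σ : Equiv.Perm (Fin 3) => (![1,1,0]) ∘ σ))
        = {![1,1,0], ![1,0,1], ![0,1,1]} from by decide,
      Finset.sum_insert (by decide), Finset.sum_insert (by decide), Finset.sum_singleton]
    simp [Fin.prod_univ_three]
    ring
  have s221 : sym 2 2 1 = x 0 ^ 2 * x 1 ^ 2 * x 2 + x 0 ^ 2 * x 1 * x 2 ^ 2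
      + x 0 * x 1 ^ 2 * x 2 ^ 2 := by
    rw [sym, show (Finset.univ.image (fun σ : Equiv.Perm (Fin 3) => (![2,2,1]) ∘ σ))
        = {![2,2,1], ![2,1,2], ![1,2,2]} from by decide,
      Finset.sum_insert (by decide), Finset.sum_insert (by decide), Finset.sum_singleton]
    simp [Fin.prod_univ_three]
    ring
  have s210 : sym 2 1 0 = x 0 ^ 2 * x 1 + x 0 ^ 2 * x 2 + x 1 ^ 2 * x 0 + x 1 ^ 2 * x 2
      + x 2 ^ 2 * x 0 + x 2 ^ 2 * x 1 := by
    rw [sym, show (Finset.univ.image (fun σ : Equiv.Perm (Fin 3) => (![2,1,0]) ∘ σ))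
        = {![2,1,0], ![2,0,1], ![1,2,0], ![0,2,1], ![1,0,2], ![0,1,2]} from by decide,
      Finset.sum_insert (by decide), Finset.sum_insert (by decide), Finset.sum_insert (by decide),
      Finset.sum_insert (by decide), Finset.sum_insert (by decide), Finset.sum_singleton]
    simp [Fin.prod_univ_three]
    ring
  have s100 : sym 1 0 0 = x 0 + x 1 + x 2 := by
    rw [sym, show (Finset.univ.image (fun σ : Equiv.Perm (Fin 3) => (![1,0,0]) ∘ σ))
        = {![1,0,0], ![0,1,0], ![0,0,1]} from by decide,
      Finset.sum_insert (by decide), Finset.sum_insert (by decide), Finset.sum_singleton]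
    simp [Fin.prod_univ_three]
    ring
  have s111 : sym 1 1 1 = x 0 * x 1 * x 2 := by
    rw [sym, show (Finset.univ.image (fun σ : Equiv.Perm (Fin 3) => (![1,1,1]) ∘ σ))
        = {![1,1,1]} from by decide, Finset.sum_singleton]
    simp [Fin.prod_univ_three]
  rw [w01, w11, w12, s211, s110, s221, s210, s100, s111]
  have h6 : (p : F) ^ 6 ≠ 0 := pow_ne_zero 6 hp
  have H1 : (x 0 + x 1 + x 2) / p = (x 0 + x 1 + x 2) * p ^ 5 / p ^ 6 := by
    rw [div_eq_div_iff hp h6]; ring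
  have H3 : p ^ 2 * (x 0 * x 1 * x 2) * ((x 0 * x 1 + x 0 * x 2 + x 1 * x 2) / p ^ 3)
      = p ^ 2 * (x 0 * x 1 * x 2) * (x 0 * x 1 + x 0 * x 2 + x 1 * x 2) * p ^ 3 / p ^ 6 := by
    rw [← mul_div_assoc, div_eq_div_iff (pow_ne_zero 3 hp) h6]; ring
  have H4 : (p ^ 2 - 1) * ((x 0 * x 1 + x 0 * x 2 + x 1 * x 2) / p ^ 3)
      = (p ^ 2 - 1) * (x 0 * x 1 + x 0 * x 2 + x 1 * x 2) * p ^ 3 / p ^ 6 := by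
    rw [← mul_div_assoc, div_eq_div_iff (pow_ne_zero 3 hp) h6]; ring
  have H2 : p ^ 3 * ((p ^ 2 * (x 0 ^ 2 * x 1 + x 0 ^ 2 * x 2 + x 1 ^ 2 * x 0 + x 1 ^ 2 * x 2
          + x 2 ^ 2 * x 0 + x 2 ^ 2 * x 1)
        + (2 * p + 1) * (p - 1) * (x 0 * x 1 * x 2)) / p ^ 6)
      = p ^ 3 * (p ^ 2 * (x 0 ^ 2 * x 1 + x 0 ^ 2 * x 2 + x 1 ^ 2 * x 0 + x 1 ^ 2 * x 2
          + x 2 ^ 2 * x 0 + x 2 ^ 2 * x 1)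
        + (2 * p + 1) * (p - 1) * (x 0 * x 1 * x 2)) / p ^ 6 := (mul_div_assoc _ _ _).symm
  have H5a : (p ^ 2 - 1) * (x 0 * x 1 * x 2 / p ^ 2)
      = (p ^ 2 - 1) * (x 0 * x 1 * x 2) / p ^ 2 := (mul_div_assoc _ _ _).symm
  have H5 : (p ^ 2 - 1) * (x 0 * x 1 * x 2 / p ^ 2) * ((x 0 + x 1 + x 2) / p)
      = (p ^ 2 - 1) * (x 0 * x 1 * x 2) * (x 0 + x 1 + x 2) * p ^ 3 / p ^ 6 := by
    rw [H5a, div_mul_div_comm, div_eq_div_iff (mul_ne_zero (pow_ne_zero 2 hp) hp) h6]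
    ring
  have H6 : (p ^ 3 - p ^ 2) * (p ^ 2 + p + 1) * (x 0 * x 1 * x 2 / p ^ 6)
      = (p ^ 3 - p ^ 2) * (p ^ 2 + p + 1) * (x 0 * x 1 * x 2) / p ^ 6 := by
    rw [← mul_div_assoc]
  have R1 : ((p ^ 2 - 1) / p ^ 3) * ((x 0 ^ 2 * x 1 * x 2 + x 0 * x 1 ^ 2 * x 2 + x 0 * x 1 * x 2 ^ 2)
        + (x 0 * x 1 + x 0 * x 2 + x 1 * x 2))
      = (p ^ 2 - 1) * ((x 0 ^ 2 * x 1 * x 2 + x 0 * x 1 ^ 2 * x 2 + x 0 * x 1 * x 2 ^ 2)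
        + (x 0 * x 1 + x 0 * x 2 + x 1 * x 2)) * p ^ 3 / p ^ 6 := by
    rw [div_mul_eq_mul_div, div_eq_div_iff (pow_ne_zero 3 hp) h6]; ring
  have R2 : (1 / p) * ((x 0 ^ 2 * x 1 ^ 2 * x 2 + x 0 ^ 2 * x 1 * x 2 ^ 2 + x 0 * x 1 ^ 2 * x 2 ^ 2)
        + (x 0 ^ 2 * x 1 + x 0 ^ 2 * x 2 + x 1 ^ 2 * x 0 + x 1 ^ 2 * x 2 + x 2 ^ 2 * x 0 + x 2 ^ 2 * x 1)
        + (x 0 + x 1 + x 2))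
      = ((x 0 ^ 2 * x 1 ^ 2 * x 2 + x 0 ^ 2 * x 1 * x 2 ^ 2 + x 0 * x 1 ^ 2 * x 2 ^ 2)
        + (x 0 ^ 2 * x 1 + x 0 ^ 2 * x 2 + x 1 ^ 2 * x 0 + x 1 ^ 2 * x 2 + x 2 ^ 2 * x 0 + x 2 ^ 2 * x 1)
        + (x 0 + x 1 + x 2)) * p ^ 5 / p ^ 6 := by
    rw [div_mul_eq_mul_div, div_eq_div_iff hp h6]; ring
  have R3 : ((p - 1) * (3 * p ^ 2 + 2 * p + 1) / p ^ 4) * (x 0 * x 1 * x 2)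
      = (p - 1) * (3 * p ^ 2 + 2 * p + 1) * (x 0 * x 1 * x 2) * p ^ 2 / p ^ 6 := by
    rw [div_mul_eq_mul_div, div_eq_div_iff (pow_ne_zero 4 hp) h6]; ring
  rw [H2, H3, H4, H5, H6, H1, R1, R2, R3, ← add_div, ← add_div, ← add_div,
    ← add_div, ← add_div, ← add_div, ← add_div]
  rw [div_eq_div_iff h6 h6]
  ring
end
end

section
/- In the field F = ℚ(p, x₁, x₂, x₃) one has the identity ω(1,1) + p⁴·(x₁x₂x₃/p⁶)·ω(0,1) + (p−1)(p²+p+1)·(x₁x₂x₃/p⁶) = (1/p³)(sym_{1,1,0}+sym_{2,1,1}) + ((p−1)(p²+p+1)/p⁶)·sym_{1,1,1}. (The left-hand side is Ω(T₂(p²))/x₀² computed from Andrianov's formula Ω(T_i(p²)) = Σ_{a+b≤3, a≥i} p^{b(a+b+1)} sm_p(a−i,a) x₀² ω(π_{a,b}) for i = 2, using sm_p(0,2) = 1, sm_p(1,3) = (p−1)(p²+p+1), and homogeneity ω(t(p·d)) = (x₁x₂x₃/p⁶)ω(t(d)).) -/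
/-! Common setup: the field `F = ℚ(p, x₁, x₂, x₃)`, realized as the fraction field of the
polynomial ring `ℚ[p, x₁, x₂, x₃]`.  `p` is the variable of index `0`, and `x i` (for
`i : Fin 3`) are the variables `x₁, x₂, x₃`. -/

noncomputable section

lemma aux_ne_zero {q : MvPolynomial (Fin 4) ℚ} (v : Fin 4 → ℚ)
    (h : MvPolynomial.eval v q ≠ 0) : algebraMap (MvPolynomial (Fin 4) ℚ) F q ≠ 0 := by
  intro h0
  apply h
  rw [show q = 0 from IsFractionRing.injective (MvPolynomial (Fin 4) ℚ) F (by simpa using h0)]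
  simp

lemma hx01 : x 0 - x 1 ≠ 0 := by
  have := aux_ne_zero (q := MvPolynomial.X 1 - MvPolynomial.X 2) ![0,1,2,3] (by norm_num [Matrix.cons_val_two, Matrix.cons_val_three, Matrix.vecHead, Matrix.vecTail])
  simpa [x, map_sub, show (0:Fin 3).succ = 1 from rfl, show (1:Fin 3).succ = 2 from rfl] using this

lemma hx02 : x 0 - x 2 ≠ 0 := by
  have := aux_ne_zero (q := MvPolynomial.X 1 - MvPolynomial.X 3) ![0,1,2,3] (by norm_num [Matrix.cons_val_two, Matrix.cons_val_three, Matrix.vecHead, Matrix.vecTail])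
  simpa [x, map_sub, show (0:Fin 3).succ = 1 from rfl, show (2:Fin 3).succ = 3 from rfl] using this

lemma hx12 : x 1 - x 2 ≠ 0 := by
  have := aux_ne_zero (q := MvPolynomial.X 2 - MvPolynomial.X 3) ![0,1,2,3] (by norm_num [Matrix.cons_val_two, Matrix.cons_val_three, Matrix.vecHead, Matrix.vecTail])
  simpa [x, map_sub, show (1:Fin 3).succ = 2 from rfl, show (2:Fin 3).succ = 3 from rfl] using this

lemma perm_univ : (Finset.univ : Finset (Equiv.Perm (Fin 3))) =
    {1, Equiv.swap 0 1, Equiv.swap 0 2, Equiv.swap 1 2, finRotate 3, (finRotate 3)⁻¹} := by decide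

lemma omega_sum (l m : ℕ) :
    ω l m = ((if l = 0 ∧ m = 0 then p ^ 3 / ((p + 1) * (p ^ 2 + p + 1))
    else if l = 0 ∨ l = m then p / (p + 1)
    else 1) / p ^ (2 * l + m)) *
    ( x 1 ^ l * x 2 ^ m * ((x 1 - x 0 / p) * (x 2 - x 0 / p) * (x 2 - x 1 / p)) /
        ((x 1 - x 0) * (x 2 - x 0) * (x 2 - x 1))
    + x 0 ^ l * x 2 ^ m * ((x 0 - x 1 / p) * (x 2 - x 1 / p) * (x 2 - x 0 / p)) /
        ((x 0 - x 1) * (x 2 - x 1) * (x 2 - x 0))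
    + x 1 ^ l * x 0 ^ m * ((x 1 - x 2 / p) * (x 0 - x 2 / p) * (x 0 - x 1 / p)) /
        ((x 1 - x 2) * (x 0 - x 2) * (x 0 - x 1))
    + x 2 ^ l * x 1 ^ m * ((x 2 - x 0 / p) * (x 1 - x 0 / p) * (x 1 - x 2 / p)) /
        ((x 2 - x 0) * (x 1 - x 0) * (x 1 - x 2))
    + x 2 ^ l * x 0 ^ m * ((x 2 - x 1 / p) * (x 0 - x 1 / p) * (x 0 - x 2 / p)) /
        ((x 2 - x 1) * (x 0 - x 1) * (x 0 - x 2))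
    + x 0 ^ l * x 1 ^ m * ((x 0 - x 2 / p) * (x 1 - x 2 / p) * (x 1 - x 0 / p)) /
        ((x 0 - x 2) * (x 1 - x 2) * (x 1 - x 0)) ) := by
  rw [ω, perm_univ, Finset.sum_insert (by decide), Finset.sum_insert (by decide),
    Finset.sum_insert (by decide), Finset.sum_insert (by decide),
    Finset.sum_insert (by decide), Finset.sum_singleton]
  rw [show ((1 : Equiv.Perm (Fin 3)) 0) = 0 from by decide,
    show ((1 : Equiv.Perm (Fin 3)) 1) = 1 from by decide,
    show ((1 : Equiv.Perm (Fin 3)) 2) = 2 from by decide,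
    show (Equiv.swap (0:Fin 3) 1) 0 = 1 from by decide,
    show (Equiv.swap (0:Fin 3) 1) 1 = 0 from by decide,
    show (Equiv.swap (0:Fin 3) 1) 2 = 2 from by decide,
    show (Equiv.swap (0:Fin 3) 2) 0 = 2 from by decide,
    show (Equiv.swap (0:Fin 3) 2) 1 = 1 from by decide,
    show (Equiv.swap (0:Fin 3) 2) 2 = 0 from by decide,
    show (Equiv.swap (1:Fin 3) 2) 0 = 0 from by decide,
    show (Equiv.swap (1:Fin 3) 2) 1 = 2 from by decide,
    show (Equiv.swap (1:Fin 3) 2) 2 = 1 from by decide,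
    show (finRotate 3) 0 = 1 from by decide,
    show (finRotate 3) 1 = 2 from by decide,
    show (finRotate 3) 2 = 0 from by decide,
    show ((finRotate 3)⁻¹) 0 = 2 from by decide,
    show ((finRotate 3)⁻¹) 1 = 0 from by decide,
    show ((finRotate 3)⁻¹) 2 = 1 from by decide]
  ring

lemma sym110 : sym 1 1 0 = x 0 * x 1 + x 0 * x 2 + x 1 * x 2 := by
  rw [sym, show (Finset.univ.image (fun σ : Equiv.Perm (Fin 3) => (![1,1,0]) ∘ σ))
      = ({![1,1,0], ![1,0,1], ![0,1,1]} : Finset (Fin 3 → ℕ)) from by decide,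
    Finset.sum_insert (by decide), Finset.sum_insert (by decide), Finset.sum_singleton]
  simp [Fin.prod_univ_three]
  ring

lemma sym211 : sym 2 1 1 = x 0 ^ 2 * x 1 * x 2 + x 0 * x 1 ^ 2 * x 2 + x 0 * x 1 * x 2 ^ 2 := by
  rw [sym, show (Finset.univ.image (fun σ : Equiv.Perm (Fin 3) => (![2,1,1]) ∘ σ))
      = ({![2,1,1], ![1,2,1], ![1,1,2]} : Finset (Fin 3 → ℕ)) from by decide,
    Finset.sum_insert (by decide), Finset.sum_insert (by decide), Finset.sum_singleton]
  simp [Fin.prod_univ_three]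
  ring

lemma sym111 : sym 1 1 1 = x 0 * x 1 * x 2 := by
  rw [sym, show (Finset.univ.image (fun σ : Equiv.Perm (Fin 3) => (![1,1,1]) ∘ σ))
      = ({![1,1,1]} : Finset (Fin 3 → ℕ)) from by decide, Finset.sum_singleton]
  simp [Fin.prod_univ_three]


set_option maxHeartbeats 1600000 in
/-- the identity for `Ω(T₂(p²))/x₀²`. -/
theorem Omega_T2_p2 :
    ω 1 1 + p ^ 4 * (x 0 * x 1 * x 2 / p ^ 6) * ω 0 1
      + (p - 1) * (p ^ 2 + p + 1) * (x 0 * x 1 * x 2 / p ^ 6)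
    = (1 / p ^ 3) * (sym 1 1 0 + sym 2 1 1)
      + ((p - 1) * (p ^ 2 + p + 1) / p ^ 6) * sym 1 1 1 := by
  rw [w01, w11, sym110, sym211, sym111]
  rw [show ((x 0 * x 1 + x 0 * x 2 + x 1 * x 2) / p ^ 3 : F)
        = (x 0 * x 1 + x 0 * x 2 + x 1 * x 2) * p ^ 3 / p ^ 6 from by
      rw [div_eq_div_iff (pow_ne_zero _ hp) (pow_ne_zero _ hp)]; ring,
    show (p ^ 4 * (x 0 * x 1 * x 2 / p ^ 6) * ((x 0 + x 1 + x 2) / p) : F)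
        = x 0 * x 1 * x 2 * (x 0 + x 1 + x 2) * p ^ 3 / p ^ 6 from by
      rw [mul_comm (p ^ 4) (x 0 * x 1 * x 2 / p ^ 6), div_mul_eq_mul_div, div_mul_div_comm,
        div_eq_div_iff (mul_ne_zero (pow_ne_zero 6 hp) hp) (pow_ne_zero 6 hp)]
      ring,
    show ((p - 1) * (p ^ 2 + p + 1) * (x 0 * x 1 * x 2 / p ^ 6) : F)
        = (p - 1) * (p ^ 2 + p + 1) * (x 0 * x 1 * x 2) / p ^ 6 from by
      rw [← mul_div_assoc],
    show ((1 : F) / p ^ 3 * (x 0 * x 1 + x 0 * x 2 + x 1 * x 2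
          + (x 0 ^ 2 * x 1 * x 2 + x 0 * x 1 ^ 2 * x 2 + x 0 * x 1 * x 2 ^ 2)))
        = (x 0 * x 1 + x 0 * x 2 + x 1 * x 2
          + (x 0 ^ 2 * x 1 * x 2 + x 0 * x 1 ^ 2 * x 2 + x 0 * x 1 * x 2 ^ 2)) * p ^ 3 / p ^ 6 from by
      rw [div_mul_eq_mul_div, div_eq_div_iff (pow_ne_zero _ hp) (pow_ne_zero _ hp)]; ring,
    show ((p - 1) * (p ^ 2 + p + 1) / p ^ 6 * (x 0 * x 1 * x 2) : F)
        = (p - 1) * (p ^ 2 + p + 1) * (x 0 * x 1 * x 2) / p ^ 6 from by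
      rw [div_mul_eq_mul_div]]
  rw [← add_div, ← add_div, ← add_div,
    div_eq_div_iff (pow_ne_zero 6 hp) (pow_ne_zero 6 hp)]
  ring
end
end

section
/- In the field F = ℚ(p, x₁, x₂, x₃) one has ω(1,2) = ((2p²−p−1)/p⁶)·sym_{1,1,1} + (1/p⁴)·sym_{2,1,0}, i.e. the spherical image of the GL₃ Hecke operator t(1,p,p²) equals this explicit symmetric polynomial expression. -/
/-! Common setup: the field `F = ℚ(p, x₁, x₂, x₃)`, realized as the fraction field of the
polynomial ring `ℚ[p, x₁, x₂, x₃]`.  `p` is the variable of index `0`, and `x i` (for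
`i : Fin 3`) are the variables `x₁, x₂, x₃`. -/

noncomputable section

set_option maxHeartbeats 1000000 in
/-- `ω(1,2) = ((2p²−p−1)/p⁶)·sym_{1,1,1} + (1/p⁴)·sym_{2,1,0}`. -/
theorem omega_one_two :
    ω 1 2 = ((2 * p ^ 2 - p - 1) / p ^ 6) * sym 1 1 1 + (1 / p ^ 4) * sym 2 1 0 := by
  have hinj : Function.Injective (algebraMap (MvPolynomial (Fin 4) ℚ) F) :=
    IsFractionRing.injective _ _
  have hX : ∀ i j : Fin 4, i ≠ j →
      algebraMap (MvPolynomial (Fin 4) ℚ) F (MvPolynomial.X i) ≠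
      algebraMap (MvPolynomial (Fin 4) ℚ) F (MvPolynomial.X j) := by
    intro i j hij h
    exact hij (MvPolynomial.X_injective (hinj h))
  have hp : p ≠ 0 := by
    intro h
    exact MvPolynomial.X_ne_zero 0 (hinj (by simpa [p] using h))
  have h01 : x 0 - x 1 ≠ 0 := sub_ne_zero.mpr (hX _ _ (by decide))
  have h02 : x 0 - x 2 ≠ 0 := sub_ne_zero.mpr (hX _ _ (by decide))
  have h12 : x 1 - x 2 ≠ 0 := sub_ne_zero.mpr (hX _ _ (by decide))
  have h10 : x 1 - x 0 ≠ 0 := sub_ne_zero.mpr (hX _ _ (by decide))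
  have h20 : x 2 - x 0 ≠ 0 := sub_ne_zero.mpr (hX _ _ (by decide))
  have h21 : x 2 - x 1 ≠ 0 := sub_ne_zero.mpr (hX _ _ (by decide))
  have huniv : (Finset.univ : Finset (Equiv.Perm (Fin 3))) =
      {1, Equiv.swap 0 1, Equiv.swap 0 2, Equiv.swap 1 2,
       Equiv.swap 0 1 * Equiv.swap 1 2, Equiv.swap 1 2 * Equiv.swap 0 1} := by decide
  have hsym111 : sym 1 1 1 = x 0 * x 1 * x 2 := by
    have : (Finset.univ.image (fun σ : Equiv.Perm (Fin 3) => (![1,1,1]) ∘ σ)) =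
        ({![1,1,1]} : Finset (Fin 3 → ℕ)) := by decide
    rw [sym, this, Finset.sum_singleton, Fin.prod_univ_three]
    norm_num [Matrix.cons_val_two]
  have hsym210 : sym 2 1 0 = x 0 ^ 2 * x 1 + x 1 ^ 2 * x 0 + x 0 ^ 2 * x 2
      + x 2 ^ 2 * x 0 + x 1 ^ 2 * x 2 + x 2 ^ 2 * x 1 := by
    have : (Finset.univ.image (fun σ : Equiv.Perm (Fin 3) => (![2,1,0]) ∘ σ)) =
        ({![2,1,0], ![1,2,0], ![0,1,2], ![2,0,1], ![0,2,1], ![1,0,2]} : Finset (Fin 3 → ℕ)) := by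
      decide
    rw [sym, this, Finset.sum_insert (by decide), Finset.sum_insert (by decide),
      Finset.sum_insert (by decide), Finset.sum_insert (by decide),
      Finset.sum_insert (by decide), Finset.sum_singleton]
    simp [Fin.prod_univ_three]
    ring
  rw [ω, huniv, Finset.sum_insert (by decide), Finset.sum_insert (by decide),
    Finset.sum_insert (by decide), Finset.sum_insert (by decide),
    Finset.sum_insert (by decide), Finset.sum_singleton, hsym111, hsym210]
  have e1 : (Equiv.swap (0:Fin 3) 1) 0 = 1 := by decide
  have e2 : (Equiv.swap (0:Fin 3) 1) 1 = 0 := by decide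
  have e3 : (Equiv.swap (0:Fin 3) 1) 2 = 2 := by decide
  have e4 : (Equiv.swap (0:Fin 3) 2) 0 = 2 := by decide
  have e5 : (Equiv.swap (0:Fin 3) 2) 1 = 1 := by decide
  have e6 : (Equiv.swap (0:Fin 3) 2) 2 = 0 := by decide
  have e7 : (Equiv.swap (1:Fin 3) 2) 0 = 0 := by decide
  have e8 : (Equiv.swap (1:Fin 3) 2) 1 = 2 := by decide
  have e9 : (Equiv.swap (1:Fin 3) 2) 2 = 1 := by decide
  simp only [Equiv.Perm.mul_apply, Equiv.Perm.one_apply, e1, e2, e3, e4, e5, e6, e7, e8, e9]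
  norm_num
  have hnum : ∀ a b c : F, (a - b / p) * (c - b / p) * (c - a / p)
      = (p * a - b) * (p * c - b) * (p * c - a) / p ^ 3 := by
    intro a b c
    field_simp
  simp only [hnum, mul_div_assoc', div_div]
  rw [show (p ^ 3 * ((x 0 - x 1) * (x 2 - x 1) * (x 2 - x 0)) : F)
      = -(p ^ 3 * ((x 1 - x 0) * (x 2 - x 0) * (x 2 - x 1))) from by ring,
    show (p ^ 3 * ((x 1 - x 2) * (x 0 - x 2) * (x 0 - x 1)) : F)
      = -(p ^ 3 * ((x 1 - x 0) * (x 2 - x 0) * (x 2 - x 1))) from by ring,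
    show (p ^ 3 * ((x 2 - x 0) * (x 1 - x 0) * (x 1 - x 2)) : F)
      = -(p ^ 3 * ((x 1 - x 0) * (x 2 - x 0) * (x 2 - x 1))) from by ring,
    show (p ^ 3 * ((x 2 - x 1) * (x 0 - x 1) * (x 0 - x 2)) : F)
      = (p ^ 3 * ((x 1 - x 0) * (x 2 - x 0) * (x 2 - x 1))) from by ring,
    show (p ^ 3 * ((x 0 - x 2) * (x 1 - x 2) * (x 1 - x 0)) : F)
      = (p ^ 3 * ((x 1 - x 0) * (x 2 - x 0) * (x 2 - x 1))) from by ring]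
  simp only [div_neg, ← neg_div, ← add_div]
  have hΔ : (p ^ 3 * ((x 1 - x 0) * (x 2 - x 0) * (x 2 - x 1)) : F) * p ^ 4 ≠ 0 :=
    mul_ne_zero
      (mul_ne_zero (pow_ne_zero _ hp) (mul_ne_zero (mul_ne_zero h10 h20) h21))
      (pow_ne_zero _ hp)
  rw [inv_mul_eq_div, div_div, div_eq_iff hΔ]
  field_simp
  ring
end
end
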